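/- Let d ≥ 1 be an integer. For all s ∈ (0,1] and all x₁, x₂, y₁, y₂ ∈ ℝ^d (with the Euclidean norm): ‖y₁−y₂‖²/(4s) + 3‖x₂−x₁−s(y₁+y₂)/2‖²/s³ ≥ (‖x₂−x₁‖² + ‖y₂−y₁‖²)/(8s) − (3/4)‖y₁+y₂‖². -/

import Mathlib

open MeasureTheory ProbabilityTheory Filter Set

noncomputable section

abbrev Ed (d : ℕ) := EuclideanSpace ℝ (Fin d)

set_option maxHeartbeats 1000000 in
theorem statement13 (d : ℕ) (hd : 1 ≤ d) (s : ℝ) (hs : s ∈ Set.Ioc (0 : ℝ) 1)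
    (x₁ x₂ y₁ y₂ : Ed d) :
    (‖x₂ - x₁‖ ^ 2 + ‖y₂ - y₁‖ ^ 2) / (8 * s) - (3 / 4) * ‖y₁ + y₂‖ ^ 2 ≤
      ‖y₁ - y₂‖ ^ 2 / (4 * s) + 3 * ‖x₂ - x₁ - (s / 2) • (y₁ + y₂)‖ ^ 2 / s ^ 3 := by
  obtain ⟨hs0, hs1⟩ := hs
  have hyy : ‖y₂ - y₁‖ = ‖y₁ - y₂‖ := norm_sub_rev _ _
  set a := x₂ - x₁ with ha
  set w := y₁ + y₂ with hw
  set A := ‖a - (s / 2) • w‖ with hA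
  set B := ‖w‖ with hB
  set Y := ‖y₁ - y₂‖ with hYdef
  have hAnn : 0 ≤ A := norm_nonneg _
  have hBnn : 0 ≤ B := norm_nonneg _
  have hYnn : 0 ≤ Y := norm_nonneg _
  have hCnn : 0 ≤ ‖a‖ := norm_nonneg _
  have hbnorm : ‖(s / 2) • w‖ = (s / 2) * B := by
    rw [norm_smul, Real.norm_eq_abs, abs_of_pos (by linarith)]
  have htri : ‖a‖ ≤ A + (s / 2) * B := by
    have := norm_add_le (a - (s / 2) • w) ((s / 2) • w)
    rw [sub_add_cancel, hbnorm] at this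
    exact this
  have hC2 : ‖a‖ ^ 2 ≤ 2 * A ^ 2 + (s ^ 2 / 2) * B ^ 2 := by
    nlinarith [sq_nonneg (A - (s / 2) * B), sq_nonneg (A + (s / 2) * B)]
  rw [hyy]
  have hs3 : 0 < s ^ 3 := by positivity
  rw [div_sub' (by positivity : (8 : ℝ) * s ≠ 0),
    div_add_div _ _ (by positivity : (4 : ℝ) * s ≠ 0) (ne_of_gt hs3),
    div_le_div_iff₀ (by positivity) (by positivity)]
  have hsq : s ^ 2 ≤ 1 := by nlinarith
  have h1 : 0 ≤ (1 - s ^ 2) * (s ^ 2 * A ^ 2) :=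
    mul_nonneg (by linarith) (by positivity)
  have h2 : 0 ≤ (12 - s) * (s ^ 5 * B ^ 2) := by
    have : 0 ≤ s ^ 5 * B ^ 2 := by positivity
    nlinarith
  have h3 := mul_le_mul_of_nonneg_right hC2 (by positivity : (0 : ℝ) ≤ 4 * s ^ 4)
  have h4 : 0 ≤ s ^ 4 * Y ^ 2 := by positivity
  ring_nf at h1 h2 h3 h4 ⊢
  nlinarith [h1, h2, h3, h4]
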